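/- Let S¹ act continuously on a topological space M, let φ : M → ℝ be a continuous S¹-invariant function, and let a ∈ ℝ. Then the map sending m ∈ M_{φ<a} = {m ∈ M : φ(m) < a} to the S¹-orbit of (m, √(a − φ(m))) is a homeomorphism from M_{φ<a} (with the subspace topology) onto the subset of the cut space M^a = ψ⁻¹(a)/S¹ consisting of orbits of points (m, z) with z ≠ 0 (with the topology induced from the quotient topology on M^a). -/

import Mathlib

variable {M : Type*} [TopologicalSpace M] [MulAction Circle M]

/-- The level set `ψ⁻¹(a)` of `ψ(m, z) = φ(m) + |z|²` in `M × ℂ` (with the subspace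
topology). -/
abbrev PsiLevel (φ : M → ℝ) (a : ℝ) : Type _ :=
  {p : M × ℂ // φ p.1 + Complex.normSq p.2 = a}

/-- The orbit relation of the diagonal `S¹`-action on the level set `ψ⁻¹(a)`. -/
abbrev cutRel (φ : M → ℝ) (a : ℝ) : PsiLevel φ a → PsiLevel φ a → Prop :=
  fun p q => ∃ w : Circle, w • p.1.1 = q.1.1 ∧ (w : ℂ) * p.1.2 = q.1.2

/-- The cut space `M^a = ψ⁻¹(a)/S¹`, with the quotient topology. -/
abbrev CutSpace (φ : M → ℝ) (a : ℝ) : Type _ := Quot (cutRel φ a)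

/-- The subset of the cut space `M^a` consisting of the orbits of points `(m, z)` with
`z ≠ 0`, with the topology induced from the quotient topology on `M^a`. -/
abbrev CutSpaceNonzero (φ : M → ℝ) (a : ℝ) : Type _ :=
  {x : CutSpace φ a // ∃ p : PsiLevel φ a, p.1.2 ≠ 0 ∧ Quot.mk (cutRel φ a) p = x}

/-- The map of STATEMENT 4 : `m ∈ M_{φ<a}` is sent to the orbit of `(m, √(a - φ(m)))`,
which is an orbit of a point with nonzero `ℂ`-coordinate. -/
noncomputable def sublevelToCutSpace (φ : M → ℝ) (a : ℝ)
    (m : {m : M // φ m < a}) : CutSpaceNonzero φ a :=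
  ⟨Quot.mk _ ⟨(m.1, (Real.sqrt (a - φ m.1) : ℂ)), by
      have h : (0 : ℝ) ≤ a - φ m.1 := by linarith [m.2]
      rw [Complex.normSq_ofReal, Real.mul_self_sqrt h]; ring⟩,
    ⟨_, by
      have h : (0 : ℝ) < a - φ m.1 := by linarith [m.2]
      simpa using ne_of_gt (Real.sqrt_pos.mpr h), rfl⟩⟩

/-- `‖z‖/z` as an element of the circle. -/
noncomputable def circOf (z : ℂ) (hz : z ≠ 0) : Circle :=
  ⟨(‖z‖ : ℂ) / z, by
    have h1 : ‖(‖z‖ : ℂ) / z‖ = 1 := by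
      rw [norm_div, Complex.norm_real, Real.norm_eq_abs, abs_norm,
        div_self (norm_ne_zero_iff.mpr hz)]
    exact mem_sphere_zero_iff_norm.mpr h1⟩

lemma circOf_coe (z : ℂ) (hz : z ≠ 0) : (circOf z hz : ℂ) = (‖z‖ : ℂ) / z := rfl

lemma circOf_pos_real (r : ℝ) (hr : 0 < r) (h : (r : ℂ) ≠ 0) : circOf (r : ℂ) h = 1 := by
  apply Circle.ext
  rw [circOf_coe, Circle.coe_one]
  rw [Complex.norm_real, Real.norm_eq_abs, abs_of_pos hr]
  exact div_self h

lemma circOf_mul_circle (w : Circle) (z : ℂ) (hz : z ≠ 0)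
    (h : (w : ℂ) * z ≠ 0) : circOf ((w : ℂ) * z) h = circOf z hz * w⁻¹ := by
  apply Circle.ext
  rw [circOf_coe, Circle.coe_mul, Circle.coe_inv, circOf_coe]
  have hw : ‖(w : ℂ)‖ = 1 := mem_sphere_zero_iff_norm.1 w.2
  rw [norm_mul, hw, one_mul]
  field_simp

omit [TopologicalSpace M] in
lemma cutRel_equiv (φ : M → ℝ) (a : ℝ) : Equivalence (cutRel φ a) := by
  constructor
  · intro p; exact ⟨1, by simp⟩
  · rintro p q ⟨w, h1, h2⟩
    exact ⟨w⁻¹, by rw [← h1, inv_smul_smul], by rw [← h2, Circle.coe_inv]; field_simp⟩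
  · rintro p q r ⟨w, h1, h2⟩ ⟨v, h3, h4⟩
    exact ⟨v * w, by rw [mul_smul, h1, h3], by rw [Circle.coe_mul, mul_assoc, h2, h4]⟩

omit [TopologicalSpace M] in
lemma cut_mk_eq_iff (φ : M → ℝ) (a : ℝ) {p q : PsiLevel φ a} :
    Quot.mk (cutRel φ a) p = Quot.mk (cutRel φ a) q ↔ cutRel φ a p q := by
  rw [Quot.eq]
  exact (cutRel_equiv φ a).eqvGen_iff

omit [TopologicalSpace M] [MulAction Circle M] in
lemma sqrt_sub_eq_norm (φ : M → ℝ) (a : ℝ) (p : PsiLevel φ a) :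
    Real.sqrt (a - φ p.1.1) = ‖p.1.2‖ := by
  have h : a - φ p.1.1 = Complex.normSq p.1.2 := by linarith [p.2]
  rw [h, Complex.normSq_eq_norm_sq, Real.sqrt_sq (norm_nonneg _)]

omit [TopologicalSpace M] in
/-- Key lemma: for `p = (m, z)` on the level set with `z ≠ 0`, the point
`circOf z • m` is in the sublevel set and is sent to the orbit of `p`. -/
lemma cut_key (φ : M → ℝ) (hφinv : ∀ (w : Circle) (m : M), φ (w • m) = φ m) (a : ℝ)
    (p : PsiLevel φ a) (hz : p.1.2 ≠ 0) :
    ∃ hlt : φ (circOf p.1.2 hz • p.1.1) < a,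
      (sublevelToCutSpace φ a ⟨circOf p.1.2 hz • p.1.1, hlt⟩).1 = Quot.mk (cutRel φ a) p := by
  have hφeq : φ (circOf p.1.2 hz • p.1.1) = φ p.1.1 := hφinv _ _
  have hlt : φ (circOf p.1.2 hz • p.1.1) < a := by
    have := Complex.normSq_pos.mpr hz
    have := p.2
    linarith
  refine ⟨hlt, ?_⟩
  apply (cut_mk_eq_iff φ a).mpr
  refine ⟨(circOf p.1.2 hz)⁻¹, inv_smul_smul _ _, ?_⟩
  have hs : Real.sqrt (a - φ (circOf p.1.2 hz • p.1.1)) = ‖p.1.2‖ := by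
    rw [hφeq]
    exact sqrt_sub_eq_norm φ a p
  show ((circOf p.1.2 hz)⁻¹ : ℂ) *
      ((Real.sqrt (a - φ (circOf p.1.2 hz • p.1.1)) : ℝ) : ℂ) = p.1.2
  rw [hs, circOf_coe]
  have hn : (‖p.1.2‖ : ℂ) ≠ 0 := by
    simpa using norm_ne_zero_iff.mpr hz
  field_simp

/-- For a continuous `S¹`-action on `M`, a continuous invariant `φ : M → ℝ`
and `a ∈ ℝ`, the map `m ↦ [ (m, √(a - φ(m))) ]` is a homeomorphism from the sublevel set
`M_{φ<a}` onto the subset of the cut space `M^a = ψ⁻¹(a)/S¹` consisting of orbits of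
points `(m, z)` with `z ≠ 0`. -/
theorem sublevel_homeomorph_cutSpace_nonzero [ContinuousSMul Circle M]
    (φ : M → ℝ) (hφc : Continuous φ) (hφinv : ∀ (w : Circle) (m : M), φ (w • m) = φ m)
    (a : ℝ) :
    IsHomeomorph (sublevelToCutSpace φ a) := by
  constructor
  · -- continuity
    apply Continuous.subtype_mk
    apply Continuous.comp continuous_quot_mk
    apply Continuous.subtype_mk
    exact continuous_subtype_val.prodMk
      (Complex.continuous_ofReal.comp
        ((continuous_const.sub (hφc.comp continuous_subtype_val)).sqrt))
  · -- open map
    intro U hU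
    obtain ⟨W, hW, rfl⟩ := isOpen_induced_iff.mp hU
    set S : Set (PsiLevel φ a) := {p | ∃ hz : p.1.2 ≠ 0, circOf p.1.2 hz • p.1.1 ∈ W} with hSdef
    -- G is continuous on the nonzero part
    have hGcont : Continuous (fun p : {p : PsiLevel φ a // p.1.2 ≠ 0} =>
        circOf p.1.1.2 p.2 • p.1.1.1) := by
      apply Continuous.smul
      · apply Continuous.subtype_mk
        apply Continuous.div
        · exact Complex.continuous_ofReal.comp
            (continuous_norm.comp ((continuous_snd.comp continuous_subtype_val).comp
              continuous_subtype_val))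
        · exact (continuous_snd.comp continuous_subtype_val).comp continuous_subtype_val
        · exact fun p => p.2
      · exact (continuous_fst.comp continuous_subtype_val).comp continuous_subtype_val
    have hNopen : IsOpen {p : PsiLevel φ a | p.1.2 ≠ 0} := by
      have : Continuous (fun p : PsiLevel φ a => p.1.2) :=
        continuous_snd.comp continuous_subtype_val
      exact isOpen_compl_singleton.preimage this
    have hSopen : IsOpen S := by
      have : S = Subtype.val '' ((fun p : {p : PsiLevel φ a // p.1.2 ≠ 0} =>
          circOf p.1.1.2 p.2 • p.1.1.1) ⁻¹' W) := by
        ext p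
        constructor
        · rintro ⟨hz, hmem⟩
          exact ⟨⟨p, hz⟩, hmem, rfl⟩
        · rintro ⟨⟨q, hz⟩, hmem, rfl⟩
          exact ⟨hz, hmem⟩
      rw [this]
      exact hNopen.isOpenMap_subtype_val _ (hW.preimage hGcont)
    -- S is saturated
    have hsat : Quot.mk (cutRel φ a) ⁻¹' (Quot.mk (cutRel φ a) '' S) = S := by
      apply Set.Subset.antisymm
      · rintro p hp
        obtain ⟨q, ⟨hz, hmem⟩, hq⟩ := hp
        obtain ⟨w, hw1, hw2⟩ := (cut_mk_eq_iff φ a).mp hq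
        have hpz : p.1.2 ≠ 0 := by
          rw [← hw2]
          exact mul_ne_zero (Circle.coe_ne_zero w) hz
        refine ⟨hpz, ?_⟩
        have heq : circOf p.1.2 hpz • p.1.1 = circOf q.1.2 hz • q.1.1 := by
          have h1 : circOf p.1.2 hpz = circOf q.1.2 hz * w⁻¹ := by
            have := circOf_mul_circle w q.1.2 hz (hw2 ▸ hpz)
            simp only [hw2] at this
            exact this
          rw [h1, ← hw1, mul_smul, inv_smul_smul]
        rw [heq]
        exact hmem
      · exact Set.subset_preimage_image _ _
    refine isOpen_induced_iff.mpr ⟨Quot.mk (cutRel φ a) '' S, ?_, ?_⟩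
    · rw [isOpen_coinduced]
      rw [hsat]
      exact hSopen
    · -- val ⁻¹' (mk '' S) = f '' (val⁻¹' W)
      ext x
      constructor
      · rintro hx
        obtain ⟨q, ⟨hz, hmem⟩, hq⟩ := hx
        obtain ⟨hlt, hkey⟩ := cut_key φ hφinv a q hz
        refine ⟨⟨circOf q.1.2 hz • q.1.1, hlt⟩, hmem, ?_⟩
        apply Subtype.ext
        exact hkey.trans hq
      · rintro ⟨⟨m, hm⟩, hmem, rfl⟩
        have hr : (0 : ℝ) < Real.sqrt (a - φ m) :=
          Real.sqrt_pos.mpr (by linarith : (0 : ℝ) < a - φ m)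
        have hz0 : ((Real.sqrt (a - φ m) : ℝ) : ℂ) ≠ 0 := by exact_mod_cast ne_of_gt hr
        refine ⟨⟨(m, (Real.sqrt (a - φ m) : ℂ)), by
            have h : (0 : ℝ) ≤ a - φ m := by linarith
            rw [Complex.normSq_ofReal, Real.mul_self_sqrt h]; ring⟩, ⟨hz0, ?_⟩, rfl⟩
        show circOf _ hz0 • m ∈ W
        rw [circOf_pos_real _ hr hz0, one_smul]
        exact hmem
  · constructor
    · -- injective
      rintro ⟨m, hm⟩ ⟨m', hm'⟩ h
      have h1 := congrArg Subtype.val h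
      obtain ⟨w, hw1, hw2⟩ := (cut_mk_eq_iff φ a).mp h1
      simp only at hw1 hw2
      set s := Real.sqrt (a - φ m) with hs
      set s' := Real.sqrt (a - φ m') with hs'
      have hspos : 0 < s := Real.sqrt_pos.mpr (by linarith)
      have hseq : s = s' := by
        have := congrArg norm hw2
        rw [norm_mul, mem_sphere_zero_iff_norm.1 w.2, one_mul, Complex.norm_real,
          Complex.norm_real, Real.norm_eq_abs, Real.norm_eq_abs, abs_of_pos hspos] at this
        rw [this, abs_of_nonneg (Real.sqrt_nonneg _)]
      have hw : w = 1 := by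
        rw [← hseq] at hw2
        have hsne : (s : ℂ) ≠ 0 := by exact_mod_cast ne_of_gt hspos
        field_simp at hw2
        exact Circle.ext (hw2.trans Circle.coe_one.symm)
      apply Subtype.ext
      show m = m'
      rw [← hw1, hw, one_smul]
    · -- surjective
      rintro ⟨x, p, hz, hp⟩
      obtain ⟨hlt, hkey⟩ := cut_key φ hφinv a p hz
      refine ⟨⟨circOf p.1.2 hz • p.1.1, hlt⟩, ?_⟩
      apply Subtype.ext
      exact hkey.trans hp
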